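/- Let $G$ be a finite simple graph. For each edge $i$ of $G$ (with $i = 1,\dots,e$) let $k_i \geq 1$ be a multiplicity. Then in the Laurent polynomial ring $\mathbb{Z}[A, A^{-1}]$, writing $\delta = -A^2 - A^{-2}$ and $c = \sum_i k_i$: $A^c \delta^{v-1} + \sum_{i=1}^{e}\sum_{j=1}^{k_i} \binom{k_i}{j} A^{c-2j} \delta^{v-2+j-1} = (-1)^{v-1}A^{c+2v-2} + (-1)^{v-2}(e-v+1)A^{c+2v-6} + (\text{terms of degree} \leq c+2v-10)$, where $v$ is the number of vertices of $G$. -/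

import Mathlib

open LaurentPolynomial


private lemma kb_key0 (a : ℤ) (n : ℕ) :
    (T a * (-T 2 - T (-2)) ^ n : LaurentPolynomial ℤ)
      = ∑ i ∈ Finset.range (n+1), AddMonoidAlgebra.single (a + 4*i - 2*n) ((-1:ℤ)^n * n.choose i) := by
  have h : (-T 2 - T (-2) : LaurentPolynomial ℤ) = -(T 2 + T (-2)) := by ring
  rw [h, neg_pow, add_pow, Finset.mul_sum, Finset.mul_sum]
  refine Finset.sum_congr rfl fun i hi => ?_
  have hi' : i ≤ n := Nat.lt_succ_iff.mp (Finset.mem_range.mp hi)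
  rw [T_pow, T_pow, single_eq_C_mul_T]
  have h1 : ((n.choose i : ℤ[T;T⁻¹])) = C ((n.choose i : ℤ)) := by simp
  have h2 : ((-1:ℤ[T;T⁻¹])) = C (-1) := by simp
  have hexp : a + 4*i - 2*n = a + ((i:ℤ)*2 + ((n-i:ℕ):ℤ)*(-2)) := by
    have : ((n-i:ℕ):ℤ) = (n:ℤ) - i := by omega
    rw [this]; ring
  rw [h1, h2, hexp, T_add, T_add, map_mul, map_pow]
  ring

private lemma kb_key (a : ℤ) (n : ℕ) (m : ℤ) :
    (T a * (-T 2 - T (-2)) ^ n : LaurentPolynomial ℤ).coeff m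
      = ∑ i ∈ Finset.range (n+1), (if a + 4*i - 2*n = m then (-1:ℤ)^n * n.choose i else 0) := by
  rw [kb_key0, AddMonoidAlgebra.coeff_sum, Finset.sum_apply']
  exact Finset.sum_congr rfl fun i _ => by rw [AddMonoidAlgebra.coeff_single, Finsupp.single_apply]

private lemma kb_keyTop (a : ℤ) (n : ℕ) (m : ℤ) (hm : m = a + 2*n) :
    (T a * (-T 2 - T (-2)) ^ n : LaurentPolynomial ℤ).coeff m = (-1:ℤ)^n := by
  rw [kb_key]
  rw [Finset.sum_eq_single n]
  · rw [if_pos (by omega)]; simp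
  · intro i hi hne
    rw [if_neg]
    have := Finset.mem_range.mp hi
    omega
  · intro h; exact absurd (Finset.self_mem_range_succ n) h

private lemma kb_keySub4 (a : ℤ) (n : ℕ) (m : ℤ) (hm : m = a + 2*n - 4) :
    (T a * (-T 2 - T (-2)) ^ n : LaurentPolynomial ℤ).coeff m = (-1:ℤ)^n * n := by
  rw [kb_key]
  rcases Nat.eq_zero_or_pos n with rfl | hn
  · rw [Finset.range_one, Finset.sum_singleton, if_neg (by omega)]; simp
  rw [Finset.sum_eq_single (n-1)]
  · rw [if_pos (by omega)]
    congr 1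
    rw [Nat.choose_symm hn, Nat.choose_one_right]
  · intro i hi hne
    rw [if_neg]
    have := Finset.mem_range.mp hi
    omega
  · intro h; exact absurd (Finset.mem_range.mpr (by omega)) h

private lemma kb_keyZero (a : ℤ) (n : ℕ) (m : ℤ) (h8 : a + 2*n - 8 < m)
    (h0 : m ≠ a + 2*n) (h4 : m ≠ a + 2*n - 4) :
    (T a * (-T 2 - T (-2)) ^ n : LaurentPolynomial ℤ).coeff m = 0 := by
  rw [kb_key]
  refine Finset.sum_eq_zero fun i hi => ?_
  rw [if_neg]
  have := Finset.mem_range.mp hi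
  omega

private lemma kb_altSum (n : ℕ) (hn : n ≠ 0) :
    ∑ j ∈ Finset.Icc 1 n, (n.choose j : ℤ) * (-1)^(j-1) = 1 := by
  have h0 := Int.alternating_sum_range_choose_of_ne hn
  rw [Finset.sum_range_succ'] at h0
  simp only [pow_succ, pow_zero, one_mul, Nat.choose_zero_right, Nat.cast_one, mul_comm,
    mul_neg, mul_one, neg_mul] at h0
  rw [Finset.sum_neg_distrib] at h0
  rw [← Finset.Ico_add_one_right_eq_Icc, Finset.sum_Ico_eq_sum_range]
  rw [show n + 1 - 1 = n from rfl]
  have : ∀ i, (n.choose (1+i) : ℤ) * (-1)^(1+i-1) = (n.choose (i+1) : ℤ) * (-1)^i := by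
    intro i; rw [Nat.add_comm 1 i, Nat.add_sub_cancel]
  rw [Finset.sum_congr rfl fun i _ => this i]
  have h1 : ∑ i ∈ Finset.range n, ((n.choose (i+1) : ℤ)) * (-1)^i
      = ∑ i ∈ Finset.range n, (-1:ℤ)^i * (n.choose (i+1)) := by
    exact Finset.sum_congr rfl fun i _ => mul_comm _ _
  rw [h1]; linarith

/-- The algebraic core of the two leading coefficients of the Kauffman bracket of
an `A`-adequate diagram.  `G` is a finite simple graph with `v` vertices and `e`
edges; each edge `E` carries a multiplicity `k E ≥ 1` and `c = ∑ k E`.  With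
`δ = -A^2 - A^{-2}`, the sum
`A^c δ^{v-1} + ∑_E ∑_{j=1}^{k E} C(k E, j) A^{c-2j} δ^{v-2+j-1}`
equals `(-1)^{v-1} A^{c+2v-2} + (-1)^{v-2}(e-v+1) A^{c+2v-6}` plus terms of
degree `≤ c+2v-10`. -/
theorem bracket_two_leading_coeffs {V : Type*} [Fintype V] [Nonempty V]
    [DecidableEq V] (G : SimpleGraph V) [DecidableRel G.Adj]
    (k : Sym2 V → ℕ) (hk : ∀ E ∈ G.edgeFinset, 1 ≤ k E)
    (v e : ℕ) (hv : v = Fintype.card V) (he : e = G.edgeFinset.card)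
    (c : ℕ) (hc : c = ∑ E ∈ G.edgeFinset, k E) :
    let δ : LaurentPolynomial ℤ := -T 2 - T (-2)
    let L : LaurentPolynomial ℤ :=
      T (c : ℤ) * δ ^ (v - 1) +
        ∑ E ∈ G.edgeFinset, ∑ j ∈ Finset.Icc 1 (k E),
          ((k E).choose j : ℤ) • (T ((c : ℤ) - 2 * j) * δ ^ (v - 2 + j - 1))
    L.coeff ((c : ℤ) + 2 * v - 2) = (-1) ^ (v - 1) ∧
      L.coeff ((c : ℤ) + 2 * v - 6) = (-1) ^ v * ((e : ℤ) - v + 1) ∧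
      ∀ m : ℤ, (c : ℤ) + 2 * v - 10 < m →
        m ≠ (c : ℤ) + 2 * v - 2 → m ≠ (c : ℤ) + 2 * v - 6 → L.coeff m = 0 := by
  intro δ L
  have hv1 : 1 ≤ v := by rw [hv]; exact Fintype.card_pos
  have hL : L = T (c : ℤ) * (-T 2 - T (-2)) ^ (v - 1) +
        ∑ E ∈ G.edgeFinset, ∑ j ∈ Finset.Icc 1 (k E),
          ((k E).choose j : ℤ) • (T ((c : ℤ) - 2 * j) * (-T 2 - T (-2)) ^ (v - 2 + j - 1)) := rfl
  have happ : ∀ m : ℤ, L.coeff m =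
      (T (c : ℤ) * (-T 2 - T (-2)) ^ (v - 1) : LaurentPolynomial ℤ).coeff m +
        ∑ E ∈ G.edgeFinset, ∑ j ∈ Finset.Icc 1 (k E),
          ((k E).choose j : ℤ) *
            ((T ((c : ℤ) - 2 * j) * (-T 2 - T (-2)) ^ (v - 2 + j - 1) : LaurentPolynomial ℤ).coeff m) := by
    intro m
    rw [hL]
    rw [AddMonoidAlgebra.coeff_add, Finsupp.add_apply, AddMonoidAlgebra.coeff_sum, Finset.sum_apply']
    refine congrArg _ (Finset.sum_congr rfl fun E _ => ?_)
    rw [AddMonoidAlgebra.coeff_sum, Finset.sum_apply']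
    exact Finset.sum_congr rfl fun j _ => by rw [AddMonoidAlgebra.coeff_smul, Finsupp.smul_apply, smul_eq_mul]
  rcases Finset.eq_empty_or_nonempty G.edgeFinset with hE | hE
  · have he0 : e = 0 := by simp [he, hE]
    refine ⟨?_, ?_, ?_⟩
    · rw [happ, hE]
      simp only [Finset.sum_empty, add_zero]
      exact kb_keyTop _ _ _ (by omega)
    · rw [happ, hE]
      simp only [Finset.sum_empty, add_zero]
      rw [kb_keySub4 _ _ _ (by omega)]
      obtain ⟨w, rfl⟩ : ∃ w, v = w + 1 := ⟨v - 1, by omega⟩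
      subst he0
      simp only [Nat.add_sub_cancel, pow_succ]
      push_cast
      ring
    · intro m h10 h2 h6
      rw [happ, hE]
      simp only [Finset.sum_empty, add_zero]
      exact kb_keyZero _ _ _ (by omega) (by omega) (by omega)
  · have hv2 : 2 ≤ v := by
      obtain ⟨E, hEm⟩ := hE
      rw [hv]
      rw [SimpleGraph.mem_edgeFinset] at hEm
      induction E using Sym2.ind with
      | _ x y =>
        rw [SimpleGraph.mem_edgeSet] at hEm
        exact Fintype.one_lt_card_iff.mpr ⟨x, y, G.ne_of_adj hEm⟩
    refine ⟨?_, ?_, ?_⟩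
    · rw [happ]
      rw [kb_keyTop _ _ _ (by omega)]
      have hz : ∑ E ∈ G.edgeFinset, ∑ j ∈ Finset.Icc 1 (k E),
          ((k E).choose j : ℤ) *
            ((T ((c : ℤ) - 2 * j) * (-T 2 - T (-2)) ^ (v - 2 + j - 1) : LaurentPolynomial ℤ).coeff
              ((c : ℤ) + 2 * v - 2)) = 0 := by
        refine Finset.sum_eq_zero fun E hEm => Finset.sum_eq_zero fun j hj => ?_
        have hj1 : 1 ≤ j := (Finset.mem_Icc.mp hj).1
        rw [kb_keyZero _ _ _ (by omega) (by omega) (by omega), mul_zero]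
      rw [hz, add_zero]
    · rw [happ]
      rw [kb_keySub4 _ _ _ (by omega)]
      have hinner : ∀ E ∈ G.edgeFinset, ∑ j ∈ Finset.Icc 1 (k E),
          ((k E).choose j : ℤ) *
            ((T ((c : ℤ) - 2 * j) * (-T 2 - T (-2)) ^ (v - 2 + j - 1) : LaurentPolynomial ℤ).coeff
              ((c : ℤ) + 2 * v - 6)) = (-1) ^ v := by
        intro E hEm
        have hstep : ∀ j ∈ Finset.Icc 1 (k E),
            ((k E).choose j : ℤ) *
              ((T ((c : ℤ) - 2 * j) * (-T 2 - T (-2)) ^ (v - 2 + j - 1) : LaurentPolynomial ℤ).coeff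
                ((c : ℤ) + 2 * v - 6))
            = (-1:ℤ)^v * (((k E).choose j : ℤ) * (-1)^(j-1)) := by
          intro j hj
          have hj1 : 1 ≤ j := (Finset.mem_Icc.mp hj).1
          rw [kb_keyTop _ _ _ (by omega)]
          have hsign : ((-1:ℤ)) ^ (v - 2 + j - 1) = (-1)^v * (-1)^(j-1) := by
            rw [← pow_add, show v + (j-1) = v - 2 + j - 1 + 2 by omega, pow_add]
            simp
          rw [hsign]; ring
        rw [Finset.sum_congr rfl hstep, ← Finset.mul_sum,
          kb_altSum _ (by have := hk E hEm; omega), mul_one]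
      rw [Finset.sum_congr rfl hinner, Finset.sum_const, ← he, nsmul_eq_mul]
      have hs : ((-1:ℤ)) ^ (v-1) = -(-1)^v := by
        obtain ⟨w, hw⟩ : ∃ w, v = w + 1 := ⟨v - 1, by omega⟩
        subst hw; simp [pow_succ]
      have hcast : ((v-1:ℕ):ℤ) = (v:ℤ) - 1 := by omega
      rw [hs, hcast]; ring
    · intro m h10 h2 h6
      rw [happ]
      rw [kb_keyZero _ _ _ (by omega) (by omega) (by omega)]
      rw [zero_add]
      refine Finset.sum_eq_zero fun E hEm => Finset.sum_eq_zero fun j hj => ?_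
      have hj1 : 1 ≤ j := (Finset.mem_Icc.mp hj).1
      rw [kb_keyZero _ _ _ (by omega) (by omega) (by omega), mul_zero]
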